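/- Let R be a commutative ring, S a multiplicative subset of R, and P a u-S-pseudo-projective R-module such that the image of every R-endomorphism of P is a direct summand of P. Then the endomorphism ring End_R(P) is S-von Neumann regular: for every R-endomorphism e of P there exist s ∈ S and an R-endomorphism q of P such that s·e = e ∘ q ∘ e. -/
import Mathlib


/-!  Definitions for uniformly-S-pseudo-projective modules
(M. Adarbeh, M. Saleh, "Uniformly-S-pseudo-projective modules"). -/

universe u v w

/-- `S` is a multiplicative subset of the commutative ring `R`:
`1 ∈ S`, `0 ∉ S`, and `S` is closed under multiplication. -/
def IsMultSubset {R : Type u} [CommRing R] (S : Set R) : Prop :=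
  1 ∈ S ∧ (0 : R) ∉ S ∧ ∀ ⦃a b : R⦄, a ∈ S → b ∈ S → a * b ∈ S

/-- An `R`-module `T` is `u`-`S`-torsion if some `s ∈ S` annihilates it. -/
def IsUSTorsion {R : Type u} [CommRing R] (S : Set R) (T : Type v) [AddCommGroup T]
    [Module R T] : Prop :=
  ∃ s ∈ S, ∀ t : T, s • t = 0

/-- `f` is a `u`-`S`-monomorphism: its kernel is `u`-`S`-torsion. -/
def IsUSMono {R : Type u} [CommRing R] (S : Set R) {M : Type v} {N : Type w}
    [AddCommGroup M] [Module R M] [AddCommGroup N] [Module R N] (f : M →ₗ[R] N) : Prop :=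
  ∃ s ∈ S, ∀ m ∈ LinearMap.ker f, s • m = (0 : M)

/-- `f` is a `u`-`S`-epimorphism: its cokernel is `u`-`S`-torsion. -/
def IsUSEpi {R : Type u} [CommRing R] (S : Set R) {M : Type v} {N : Type w}
    [AddCommGroup M] [Module R M] [AddCommGroup N] [Module R N] (f : M →ₗ[R] N) : Prop :=
  ∃ s ∈ S, ∀ n : N, s • n ∈ LinearMap.range f

/-- `f` is a `u`-`S`-isomorphism: both a `u`-`S`-monomorphism and a `u`-`S`-epimorphism. -/
def IsUSIso {R : Type u} [CommRing R] (S : Set R) {M : Type v} {N : Type w}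
    [AddCommGroup M] [Module R M] [AddCommGroup N] [Module R N] (f : M →ₗ[R] N) : Prop :=
  IsUSMono S f ∧ IsUSEpi S f

/-- `P` is `u`-`S`-pseudo-projective: for every submodule `K` of `P` there is `s ∈ S` such that
every `u`-`S`-epimorphism `f : P → P/K` satisfies `s • f = π_K ∘ g` for some endomorphism
`g` of `P`. -/
def IsUSPseudoProjective {R : Type u} [CommRing R] (S : Set R) (P : Type v)
    [AddCommGroup P] [Module R P] : Prop :=
  ∀ K : Submodule R P, ∃ s ∈ S, ∀ f : P →ₗ[R] P ⧸ K, IsUSEpi S f →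
    ∃ g : P →ₗ[R] P, s • f = K.mkQ.comp g

/-- `M` is `u`-`S`-quasi-projective. -/
def IsUSQuasiProjective {R : Type u} [CommRing R] (S : Set R) (M : Type v)
    [AddCommGroup M] [Module R M] : Prop :=
  ∀ K : Submodule R M, ∃ s ∈ S, ∀ f : M →ₗ[R] M ⧸ K,
    ∃ g : M →ₗ[R] M, s • f = K.mkQ.comp g

/-- `Q` is `u`-`S`-projective (test modules in `Type v₁`). -/
def IsUSProjective.{u₁, v₁, w₁} {R : Type u₁} [CommRing R] (S : Set R) (Q : Type w₁)
    [AddCommGroup Q] [Module R Q] : Prop :=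
  ∀ (B C : Type v₁) [AddCommGroup B] [AddCommGroup C] [Module R B] [Module R C]
    (g : B →ₗ[R] C), IsUSEpi S g →
      ∃ s ∈ S, ∀ h : Q →ₗ[R] C, ∃ h' : Q →ₗ[R] B, s • h = g.comp h'

/-- `M` is `u`-`S`-injective (test modules in `Type v₁`). -/
def IsUSInjective.{u₁, v₁, w₁} {R : Type u₁} [CommRing R] (S : Set R) (M : Type w₁)
    [AddCommGroup M] [Module R M] : Prop :=
  ∀ (A B : Type v₁) [AddCommGroup A] [AddCommGroup B] [Module R A] [Module R B]
    (f : A →ₗ[R] B), IsUSMono S f →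
      ∃ s ∈ S, ∀ h : A →ₗ[R] M, ∃ h' : B →ₗ[R] M, s • h = h'.comp f

/-- `E` is `u`-`S`-pseudo-injective. -/
def IsUSPseudoInjective {R : Type u} [CommRing R] (S : Set R) (E : Type v)
    [AddCommGroup E] [Module R E] : Prop :=
  ∀ K : Submodule R E, ∃ s ∈ S, ∀ f : ↥K →ₗ[R] E, IsUSMono S f →
    ∃ g : E →ₗ[R] E, g.comp K.subtype = s • f

/-- The sequence `0 → A →f B →g C → 0` is short `u`-`S`-exact. -/
def IsShortUSExact {R : Type u} [CommRing R] (S : Set R) {A B C : Type v}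
    [AddCommGroup A] [Module R A] [AddCommGroup B] [Module R B] [AddCommGroup C] [Module R C]
    (f : A →ₗ[R] B) (g : B →ₗ[R] C) : Prop :=
  IsUSMono S f ∧ IsUSEpi S g ∧
    ∃ s ∈ S, (∀ x ∈ LinearMap.ker g, s • x ∈ LinearMap.range f) ∧
      (∀ x ∈ LinearMap.range f, s • x ∈ LinearMap.ker g)

/-- The short `u`-`S`-exact sequence `0 → A →f B →g C → 0` is `u`-`S`-split:
some multiple `s • 1_A` of the identity factors back through `f`. -/
def IsUSSplitSeq {R : Type u} [CommRing R] (S : Set R) {A B : Type v}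
    [AddCommGroup A] [Module R A] [AddCommGroup B] [Module R B] (f : A →ₗ[R] B) : Prop :=
  ∃ s ∈ S, ∃ f' : B →ₗ[R] A, f'.comp f = s • (LinearMap.id : A →ₗ[R] A)

/-- `M` is a `u`-`S`-semisimple module (test sequences with modules in `Type v₁`). -/
def IsUSSemisimpleModule.{u₁, v₁} {R : Type u₁} [CommRing R] (S : Set R) (M : Type v₁)
    [AddCommGroup M] [Module R M] : Prop :=
  ∀ (A C : Type v₁) [AddCommGroup A] [AddCommGroup C] [Module R A] [Module R C]
    (f : A →ₗ[R] M) (g : M →ₗ[R] C), IsShortUSExact S f g → IsUSSplitSeq S f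

/-- `R` is a `u`-`S`-semisimple ring: every free `R`-module is `u`-`S`-semisimple. -/
def IsUSSemisimpleRing.{u₁, v₁} {R : Type u₁} [CommRing R] (S : Set R) : Prop :=
  ∀ (F : Type v₁) [AddCommGroup F] [Module R F], Module.Free R F →
    IsUSSemisimpleModule.{u₁, v₁} S F

/-- A submodule `N` of `M` is a `u`-`S`-direct summand of `M` if there is an `R`-module `N'`
and a `u`-`S`-isomorphism between `M` and `N ⊕ N'`. -/
def IsUSDirectSummand {R : Type u} [CommRing R] (S : Set R) {M : Type v}
    [AddCommGroup M] [Module R M] (N : Submodule R M) : Prop :=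
  ∃ (N' : ModuleCat.{v} R) (h : M →ₗ[R] (↥N × ↥N')), IsUSIso S h

/-- `A` is `u`-`S`-projective relative to `B`. -/
def IsUSProjectiveRel {R : Type u} [CommRing R] (S : Set R) (A : Type v) (B : Type w)
    [AddCommGroup A] [Module R A] [AddCommGroup B] [Module R B] : Prop :=
  ∀ K : Submodule R B, ∃ s ∈ S, ∀ f : A →ₗ[R] B ⧸ K,
    ∃ h : A →ₗ[R] B, s • f = K.mkQ.comp h

/-- If `P` is `u`-`S`-pseudo-projective and the image of every endomorphism of `P` is a direct
summand of `P`, then `End_R(P)` is `S`-von Neumann regular: for every endomorphism `e` there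
are `s ∈ S` and an endomorphism `q` with `s • e = e ∘ q ∘ e`. -/
theorem endRing_sVonNeumannRegular_of_uSPseudoProjective
    {R : Type u} [CommRing R] (S : Set R) (hS : IsMultSubset S)
    {P : Type v} [AddCommGroup P] [Module R P] (hP : IsUSPseudoProjective S P)
    (h : ∀ e : P →ₗ[R] P, ∃ A' : Submodule R P, IsCompl (LinearMap.range e) A') :
    ∀ e : P →ₗ[R] P, ∃ s ∈ S, ∃ q : P →ₗ[R] P, s • e = (e.comp q).comp e := by
  intro e
  obtain ⟨A', hcompl⟩ := h e
  set K := LinearMap.ker e with hK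
  -- projection onto range e
  set pr : P →ₗ[R] ↥(LinearMap.range e) := (LinearMap.range e).linearProjOfIsCompl A' hcompl
  set f : P →ₗ[R] P ⧸ K :=
    (e.quotKerEquivRange).symm.toLinearMap.comp pr with hf
  have hfmk : ∀ x : P, f (e x) = Submodule.Quotient.mk x := by
    intro x
    have h1 : pr (e x) = ⟨e x, LinearMap.mem_range_self e x⟩ :=
      Submodule.linearProjOfIsCompl_apply_left hcompl ⟨e x, LinearMap.mem_range_self e x⟩
    have h2 : e.quotKerEquivRange (Submodule.Quotient.mk x)
        = ⟨e x, LinearMap.mem_range_self e x⟩ := rfl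
    simp only [hf, LinearMap.comp_apply, LinearEquiv.coe_coe, h1, ← h2,
      LinearEquiv.symm_apply_apply]
  have hfepi : IsUSEpi S f := by
    refine ⟨1, hS.1, fun n => ?_⟩
    obtain ⟨x, hx⟩ := (e.quotKerEquivRange n).2
    refine ⟨e x, ?_⟩
    have : (Submodule.Quotient.mk x : P ⧸ K) = n := by
      apply (e.quotKerEquivRange).injective
      ext
      simpa using hx
    rw [hfmk x, this, one_smul]
  obtain ⟨s, hsS, hps⟩ := hP K
  obtain ⟨g, hg⟩ := hps f hfepi
  refine ⟨s, hsS, g, ?_⟩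
  ext x
  have := LinearMap.congr_fun hg (e x)
  simp only [LinearMap.smul_apply, LinearMap.comp_apply, Submodule.mkQ_apply, hfmk x] at this
  simp only [LinearMap.smul_apply, LinearMap.comp_apply]
  have hmk : (Submodule.Quotient.mk (s • x) : P ⧸ K) = Submodule.Quotient.mk (g (e x)) := by
    rw [Submodule.Quotient.mk_smul]; exact this
  have hker : s • x - g (e x) ∈ K := by
    rw [← Submodule.Quotient.mk_eq_zero (p := K), Submodule.Quotient.mk_sub, hmk, sub_self]
  have := (LinearMap.mem_ker).1 hker
  rw [map_sub, map_smul, sub_eq_zero] at this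
  simpa using this
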